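/- Let q > p > 2, k ≥ 0, and M_b = ((q-p+1)/(q-p)) · ((q-p+1)/(p-1))^{-1/(q-p+1)}. Then the function V_k(x) = M_b · ((x+k)^{(q-p)/(q-p+1)} − k^{(q-p)/(q-p+1)}) satisfies (|V_k'|^{p-2} V_k')' + |V_k'|^q = 0 pointwise on (0,1), with V_k(0) = 0. -/

import Mathlib

open Set

theorem stmt_1 (p q k Mb : ℝ) (hp : 2 < p) (hq : p < q) (hk : 0 ≤ k)
    (hMb : Mb = ((q - p + 1) / (q - p)) * ((q - p + 1) / (p - 1)) ^ (-(1 / (q - p + 1))))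
    (V : ℝ → ℝ)
    (hV : ∀ x, V x = Mb * ((x + k) ^ ((q - p) / (q - p + 1)) - k ^ ((q - p) / (q - p + 1)))) :
    V 0 = 0 ∧
      ∀ x ∈ Set.Ioo (0 : ℝ) 1,
        deriv (fun y => |deriv V y| ^ (p - 2) * deriv V y) x + |deriv V x| ^ q = 0 := by
  have hVfun : V = fun x => Mb * ((x + k) ^ ((q - p) / (q - p + 1)) - k ^ ((q - p) / (q - p + 1))) :=
    funext hV
  subst hVfun
  have hs : (0:ℝ) < q - p + 1 := by linarith
  have hb : (0:ℝ) < q - p := by linarith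
  have hp1 : (0:ℝ) < p - 1 := by linarith
  set s := q - p + 1 with hs_def
  set a := (q - p) / s with ha_def
  have hc0 : (0:ℝ) < s / (p - 1) := by positivity
  set c := (s / (p - 1)) ^ (-(1 / s)) with hc_def
  have hc : 0 < c := Real.rpow_pos_of_pos hc0 _
  have hMc : Mb * a = c := by
    rw [hMb, ha_def]
    field_simp
  have ha1 : a - 1 = -(1 / s) := by
    rw [ha_def, hs_def]
    field_simp
    ring
  set V := fun x => Mb * ((x + k) ^ a - k ^ a) with hV_def
  have hderiv : ∀ y : ℝ, 0 < y → HasDerivAt V (c * (y + k) ^ (a - 1)) y := by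
    intro y hy
    have hyk : 0 < y + k := by linarith
    have h1 : HasDerivAt (fun x : ℝ => x + k) 1 y := (hasDerivAt_id y).add_const k
    have h2 : HasDerivAt (fun x : ℝ => (x + k) ^ a) (a * (y + k) ^ (a - 1) * 1) y :=
      by have := (Real.hasDerivAt_rpow_const (p := a) (Or.inl hyk.ne')).comp y h1; exact this
    have h3 := (h2.sub_const (k ^ a)).const_mul Mb
    exact h3.congr_deriv (by rw [← hMc]; ring)
  have hderiv' : ∀ y : ℝ, 0 < y → deriv V y = c * (y + k) ^ (a - 1) :=
    fun y hy => (hderiv y hy).deriv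
  constructor
  · simp [hV_def]
  intro x hx
  obtain ⟨hx0, hx1⟩ := hx
  have hxk : 0 < x + k := by linarith
  set E := (a - 1) * (p - 1) with hE
  have hGev : (fun y => |deriv V y| ^ (p - 2) * deriv V y) =ᶠ[nhds x]
      (fun y => c ^ (p - 1) * (y + k) ^ E) := by
    filter_upwards [Ioi_mem_nhds hx0] with y hy
    have hy0 : (0:ℝ) < y := hy
    have hyk : 0 < y + k := by linarith
    have ht : 0 < (y + k) ^ (a - 1) := Real.rpow_pos_of_pos hyk _
    have hct : 0 < c * (y + k) ^ (a - 1) := mul_pos hc ht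
    rw [hderiv' y hy0, abs_of_pos hct]
    calc (c * (y + k) ^ (a - 1)) ^ (p - 2) * (c * (y + k) ^ (a - 1))
        = (c * (y + k) ^ (a - 1)) ^ (p - 2) * (c * (y + k) ^ (a - 1)) ^ (1:ℝ) := by
          rw [Real.rpow_one]
      _ = (c * (y + k) ^ (a - 1)) ^ (p - 2 + 1) := (Real.rpow_add hct _ _).symm
      _ = (c * (y + k) ^ (a - 1)) ^ (p - 1) := by norm_num [show p - 2 + 1 = p - 1 by ring]
      _ = c ^ (p - 1) * ((y + k) ^ (a - 1)) ^ (p - 1) := Real.mul_rpow hc.le ht.le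
      _ = c ^ (p - 1) * (y + k) ^ E := by
          rw [hE, Real.rpow_mul hyk.le]
  have hG1 : HasDerivAt (fun y => c ^ (p - 1) * (y + k) ^ E)
      (c ^ (p - 1) * (E * (x + k) ^ (E - 1))) x := by
    have h1 : HasDerivAt (fun y : ℝ => y + k) 1 x := (hasDerivAt_id x).add_const k
    have h2 : HasDerivAt (fun y : ℝ => (y + k) ^ E) (E * (x + k) ^ (E - 1) * 1) x :=
      by have := (Real.hasDerivAt_rpow_const (p := E) (Or.inl hxk.ne')).comp x h1; exact this
    have h3 := h2.const_mul (c ^ (p - 1))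
    exact h3.congr_deriv (by ring)
  have hGd : deriv (fun y => |deriv V y| ^ (p - 2) * deriv V y) x
      = c ^ (p - 1) * (E * (x + k) ^ (E - 1)) := by
    rw [hGev.deriv_eq, hG1.deriv]
  have hxt : 0 < (x + k) ^ (a - 1) := Real.rpow_pos_of_pos hxk _
  have habs : |deriv V x| ^ q = c ^ q * (x + k) ^ ((a - 1) * q) := by
    rw [hderiv' x hx0, abs_of_pos (mul_pos hc hxt), Real.mul_rpow hc.le hxt.le,
      ← Real.rpow_mul hxk.le]
  have hexp : E - 1 = (a - 1) * q := by
    rw [hE, ha1]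
    field_simp
    linarith
  have hcs : c ^ s = (p - 1) / s := by
    rw [hc_def, ← Real.rpow_mul hc0.le]
    have h1 : -(1 / s) * s = -1 := by field_simp
    rw [h1, Real.rpow_neg_one, inv_div]
  have hcq : c ^ q = c ^ (p - 1) * ((p - 1) / s) := by
    have hq' : q = (p - 1) + s := by rw [hs_def]; ring
    rw [hq', Real.rpow_add hc, hcs]
  rw [hGd, habs, ← hexp, hcq]
  have hEeq : E = -((p - 1) / s) := by rw [hE, ha1]; ring
  rw [hEeq]
  ring
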